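/- (Lie–Trotter product formula for matrices.) Let A and B be N × N complex matrices. Then exp(A + B) = lim_{s → ∞} (exp(A/s) · exp(B/s))^s, where the limit is taken over s ∈ ℕ tending to infinity, with convergence in any matrix norm. -/

import Mathlib

open Matrix Filter

open scoped Nat
open NormedSpace

set_option linter.unusedSectionVars false


section Aux
variable {𝔸 : Type*} [NormedRing 𝔸] [NormedAlgebra ℂ 𝔸] [CompleteSpace 𝔸] [NormOneClass 𝔸]

lemma my_real_exp_eq_tsum (t : ℝ) : Real.exp t = ∑' n : ℕ, t ^ n / n ! := by
  rw [Real.exp_eq_exp_ℝ, NormedSpace.exp_eq_tsum_div]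

lemma my_norm_term (x : 𝔸) (n : ℕ) : ‖(n !⁻¹ : ℂ) • x ^ n‖ ≤ ‖x‖ ^ n / n ! := by
  rw [norm_smul, norm_inv]
  have h1 : ‖((n ! : ℕ) : ℂ)‖ = (n ! : ℝ) := by simp
  rw [h1, div_eq_inv_mul]
  gcongr
  exact norm_pow_le x n

lemma my_norm_exp_le (x : 𝔸) : ‖exp x‖ ≤ Real.exp ‖x‖ := by
  rw [NormedSpace.exp_eq_tsum (𝕂 := ℂ), my_real_exp_eq_tsum]
  refine (norm_tsum_le_tsum_norm (norm_expSeries_summable' (𝕂 := ℂ) x)).trans ?_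
  exact Summable.tsum_le_tsum (fun n => my_norm_term x n) (norm_expSeries_summable' (𝕂 := ℂ) x)
    (Real.summable_pow_div_factorial ‖x‖)

lemma my_norm_exp_sub_one_sub_id_le (x : 𝔸) :
    ‖exp x - 1 - x‖ ≤ ‖x‖ ^ 2 * Real.exp ‖x‖ := by
  have hs : Summable fun n : ℕ => ‖(n !⁻¹ : ℂ) • x ^ n‖ := norm_expSeries_summable' (𝕂 := ℂ) x
  have hsum : Summable fun n : ℕ => (n !⁻¹ : ℂ) • x ^ n := hs.of_norm
  have key : exp x - 1 - x = ∑' n : ℕ, ((n + 2)!⁻¹ : ℂ) • x ^ (n + 2) := by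
    have h2 := Summable.sum_add_tsum_nat_add (f := fun n : ℕ => (n !⁻¹ : ℂ) • x ^ n) 2 hsum
    simp only [NormedSpace.exp_eq_tsum (𝕂 := ℂ)] at h2 ⊢
    rw [← h2]
    simp [Finset.sum_range_succ, Nat.factorial]
    abel
  rw [key]
  have hshift : Summable fun n : ℕ => ‖((n + 2)!⁻¹ : ℂ) • x ^ (n + 2)‖ :=
    (summable_nat_add_iff 2).mpr hs
  refine (norm_tsum_le_tsum_norm hshift).trans ?_
  have hrhs : Summable fun n : ℕ => ‖x‖ ^ 2 * (‖x‖ ^ n / n !) :=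
    (Real.summable_pow_div_factorial ‖x‖).mul_left _
  have hterm : ∀ n : ℕ, ‖((n + 2)!⁻¹ : ℂ) • x ^ (n + 2)‖ ≤ ‖x‖ ^ 2 * (‖x‖ ^ n / n !) := by
    intro n
    refine (my_norm_term x (n + 2)).trans ?_
    have hfac : (n ! : ℝ) ≤ ((n + 2)! : ℝ) := by exact_mod_cast Nat.factorial_le (by omega)
    have hfp : (0:ℝ) < n ! := by exact_mod_cast Nat.factorial_pos n
    calc ‖x‖ ^ (n + 2) / ((n + 2)! : ℝ) ≤ ‖x‖ ^ (n + 2) / (n ! : ℝ) := by gcongr ?_ / ?_ <;> first | positivity | exact hfac | rfl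
      _ = ‖x‖ ^ 2 * (‖x‖ ^ n / n !) := by rw [pow_add]; ring
  calc (∑' n : ℕ, ‖((n + 2)!⁻¹ : ℂ) • x ^ (n + 2)‖)
      ≤ ∑' n : ℕ, ‖x‖ ^ 2 * (‖x‖ ^ n / n !) := Summable.tsum_le_tsum hterm hshift hrhs
    _ = ‖x‖ ^ 2 * Real.exp ‖x‖ := by rw [tsum_mul_left, my_real_exp_eq_tsum]

lemma my_norm_pow_sub_pow_le (u v : 𝔸) {M : ℝ} (hu : ‖u‖ ≤ M) (hv : ‖v‖ ≤ M) (hM : 1 ≤ M) :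
    ∀ n : ℕ, ‖u ^ n - v ^ n‖ ≤ n * M ^ n * ‖u - v‖ := by
  intro n
  induction n with
  | zero => simp
  | succ n ih =>
    have hid : u ^ (n + 1) - v ^ (n + 1) = u ^ n * (u - v) + (u ^ n - v ^ n) * v := by
      noncomm_ring
    have hM0 : (0:ℝ) ≤ M := zero_le_one.trans hM
    have hn : ‖u ^ n‖ ≤ M ^ n :=
      (norm_pow_le u n).trans (pow_le_pow_left₀ (norm_nonneg u) hu n)
    have h1 : ‖u ^ n * (u - v)‖ ≤ M ^ n * ‖u - v‖ :=
      (norm_mul_le _ _).trans (mul_le_mul_of_nonneg_right hn (norm_nonneg _))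
    have h2 : ‖(u ^ n - v ^ n) * v‖ ≤ (n * M ^ n * ‖u - v‖) * M := by
      refine (norm_mul_le _ _).trans ?_
      gcongr
    rw [hid]
    refine (norm_add_le _ _).trans ?_
    have hpow : M ^ n ≤ M ^ (n + 1) := pow_le_pow_right₀ hM (Nat.le_succ n)
    calc ‖u ^ n * (u - v)‖ + ‖(u ^ n - v ^ n) * v‖
        ≤ M ^ n * ‖u - v‖ + (n * M ^ n * ‖u - v‖) * M := add_le_add h1 h2
      _ ≤ M ^ n * M * ‖u - v‖ + ↑n * M ^ n * ‖u - v‖ * M := by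
          have e1 : M ^ n * 1 * ‖u - v‖ ≤ M ^ n * M * ‖u - v‖ := by gcongr
          simpa using add_le_add e1 (le_refl (↑n * M ^ n * ‖u - v‖ * M))
      _ = (↑(n + 1) : ℝ) * M ^ (n + 1) * ‖u - v‖ := by
          push_cast
          rw [pow_succ]
          ring

end Aux


set_option maxHeartbeats 1000000 in
/-- Lie–Trotter product formula for matrices: for `N × N` complex matrices `A` and `B`,
`exp(A + B) = lim_{s → ∞} (exp(A/s) · exp(B/s))^s`, the limit being over `s ∈ ℕ`. -/
theorem lie_trotter_product_formula (N : ℕ) (A B : Matrix (Fin N) (Fin N) ℂ) :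
    Tendsto
      (fun s : ℕ =>
        (NormedSpace.exp ((s : ℂ)⁻¹ • A) * NormedSpace.exp ((s : ℂ)⁻¹ • B)) ^ s)
      atTop (nhds (NormedSpace.exp (A + B))) := by
  rcases eq_or_ne N 0 with hN | hN
  · subst hN
    exact tendsto_const_nhds.congr fun s => Subsingleton.elim _ _
  haveI : Nonempty (Fin N) := ⟨⟨0, Nat.pos_of_ne_zero hN⟩⟩
  letI : SeminormedRing (Matrix (Fin N) (Fin N) ℂ) := Matrix.linftyOpSemiNormedRing
  letI : NormedRing (Matrix (Fin N) (Fin N) ℂ) := Matrix.linftyOpNormedRing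
  letI : NormedAlgebra ℂ (Matrix (Fin N) (Fin N) ℂ) := Matrix.linftyOpNormedAlgebra
  set E := NormedSpace.exp (A + B) with hE
  refine tendsto_iff_norm_sub_tendsto_zero.mpr ?_
  set c : ℝ := ‖A‖ + ‖B‖ with hc
  have hc0 : 0 ≤ c := by positivity
  set K : ℝ := Real.exp c * ((4 * Real.exp 1 * Real.exp 1 + 1) * c ^ 2) with hK
  apply squeeze_zero' (Eventually.of_forall fun s => norm_nonneg _) _
    (tendsto_const_div_atTop_nhds_zero_nat K)
  filter_upwards [eventually_ge_atTop 1, eventually_ge_atTop ⌈c⌉₊] with s hs1 hsc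
  have hs0 : (0:ℝ) < (s:ℝ) := by exact_mod_cast hs1
  have hsC : ((s:ℕ):ℂ) ≠ 0 := by exact_mod_cast Nat.one_le_iff_ne_zero.mp hs1
  have hcs : c ≤ (s:ℝ) := (Nat.ceil_le.mp hsc)
  set x : Matrix (Fin N) (Fin N) ℂ := (s : ℂ)⁻¹ • A with hxdef
  set y : Matrix (Fin N) (Fin N) ℂ := (s : ℂ)⁻¹ • B with hydef
  set r : ℝ := c / s with hr
  have hr0 : 0 ≤ r := div_nonneg hc0 hs0.le
  have hr1 : r ≤ 1 := div_le_one_of_le₀ hcs hs0.le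
  have hnx : ‖x‖ = ‖A‖ / s := by
    rw [hxdef, norm_smul, norm_inv]
    simp [div_eq_inv_mul]
  have hny : ‖y‖ = ‖B‖ / s := by
    rw [hydef, norm_smul, norm_inv]
    simp [div_eq_inv_mul]
  have hxy : ‖x‖ + ‖y‖ = r := by rw [hnx, hny, hr, hc]; ring
  have hnx_r : ‖x‖ ≤ r := by nlinarith [norm_nonneg y]
  have hny_r : ‖y‖ ≤ r := by nlinarith [norm_nonneg x]
  have hnxy : ‖x + y‖ ≤ r := (norm_add_le x y).trans_eq hxy
  set T := NormedSpace.exp x * NormedSpace.exp y with hT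
  set S := NormedSpace.exp (x + y) with hS
  -- S ^ s = E
  have hSE : S ^ s = E := by
    rw [hS, ← Matrix.exp_nsmul, hE]
    congr 1
    rw [hxdef, hydef, ← smul_add, ← Nat.cast_smul_eq_nsmul ℂ, smul_smul,
      mul_inv_cancel₀ hsC, one_smul]
  -- bound on ‖T - S‖
  have exp_r_le : Real.exp r ≤ Real.exp 1 := Real.exp_le_exp.mpr hr1
  have hbound : ∀ z : Matrix (Fin N) (Fin N) ℂ, ‖z‖ ≤ r →
      ‖NormedSpace.exp z - 1 - z‖ ≤ r ^ 2 * Real.exp 1 := fun z hz =>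
    (my_norm_exp_sub_one_sub_id_le z).trans
      (mul_le_mul (pow_le_pow_left₀ (norm_nonneg z) hz 2)
        (Real.exp_le_exp.mpr (hz.trans hr1)) (Real.exp_pos _).le (by positivity))
  have hexp_y : ‖NormedSpace.exp y‖ ≤ Real.exp 1 :=
    (my_norm_exp_le y).trans ((Real.exp_le_exp.mpr (hny_r.trans hr1)))
  have hTS : ‖T - S‖ ≤ (4 * Real.exp 1 * Real.exp 1 + 1) * r ^ 2 := by
    have hid : T - S =
        (NormedSpace.exp x - 1 - x) * NormedSpace.exp y
          + x * (NormedSpace.exp y - 1 - y)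
          + (NormedSpace.exp y - 1 - y)
          + x * y
          - (NormedSpace.exp (x + y) - 1 - (x + y)) := by
      rw [hT, hS]; noncomm_ring
    have e1 : ‖(NormedSpace.exp x - 1 - x) * NormedSpace.exp y‖ ≤ r ^ 2 * Real.exp 1 * Real.exp 1 := by
      refine (norm_mul_le _ _).trans ?_
      exact mul_le_mul (hbound x hnx_r) hexp_y (norm_nonneg _) (by positivity)
    have e2 : ‖x * (NormedSpace.exp y - 1 - y)‖ ≤ 1 * (r ^ 2 * Real.exp 1) := by
      refine (norm_mul_le _ _).trans ?_
      exact mul_le_mul (hnx_r.trans hr1) (hbound y hny_r) (norm_nonneg _) zero_le_one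
    have e3 : ‖NormedSpace.exp y - 1 - y‖ ≤ r ^ 2 * Real.exp 1 := hbound y hny_r
    have e4 : ‖x * y‖ ≤ r ^ 2 := by
      refine (norm_mul_le _ _).trans ?_
      have := mul_le_mul hnx_r hny_r (norm_nonneg y) hr0
      nlinarith
    have e5 : ‖NormedSpace.exp (x + y) - 1 - (x + y)‖ ≤ r ^ 2 * Real.exp 1 := hbound _ hnxy
    rw [hid]
    have hexp1 : (1:ℝ) ≤ Real.exp 1 := by
      have := Real.one_le_exp (by norm_num : (0:ℝ) ≤ 1); exact this
    calc ‖(NormedSpace.exp x - 1 - x) * NormedSpace.exp y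
          + x * (NormedSpace.exp y - 1 - y)
          + (NormedSpace.exp y - 1 - y)
          + x * y
          - (NormedSpace.exp (x + y) - 1 - (x + y))‖
        ≤ ‖(NormedSpace.exp x - 1 - x) * NormedSpace.exp y
          + x * (NormedSpace.exp y - 1 - y)
          + (NormedSpace.exp y - 1 - y)
          + x * y‖ + ‖NormedSpace.exp (x + y) - 1 - (x + y)‖ := norm_sub_le _ _
      _ ≤ (‖(NormedSpace.exp x - 1 - x) * NormedSpace.exp y
          + x * (NormedSpace.exp y - 1 - y)
          + (NormedSpace.exp y - 1 - y)‖ + ‖x * y‖) + ‖NormedSpace.exp (x + y) - 1 - (x + y)‖ := by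
            gcongr; exact norm_add_le _ _
      _ ≤ ((‖(NormedSpace.exp x - 1 - x) * NormedSpace.exp y
          + x * (NormedSpace.exp y - 1 - y)‖ + ‖NormedSpace.exp y - 1 - y‖) + ‖x * y‖)
            + ‖NormedSpace.exp (x + y) - 1 - (x + y)‖ := by
            gcongr; exact norm_add_le _ _
      _ ≤ (((‖(NormedSpace.exp x - 1 - x) * NormedSpace.exp y‖
          + ‖x * (NormedSpace.exp y - 1 - y)‖) + ‖NormedSpace.exp y - 1 - y‖) + ‖x * y‖)
            + ‖NormedSpace.exp (x + y) - 1 - (x + y)‖ := by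
            gcongr; exact norm_add_le _ _
      _ ≤ (((r ^ 2 * Real.exp 1 * Real.exp 1 + 1 * (r ^ 2 * Real.exp 1)) + r ^ 2 * Real.exp 1)
            + r ^ 2) + r ^ 2 * Real.exp 1 := by
            gcongr
      _ ≤ (4 * Real.exp 1 * Real.exp 1 + 1) * r ^ 2 := by nlinarith [mul_nonneg (sq_nonneg r) (mul_nonneg (sub_nonneg.mpr hexp1) (Real.exp_pos 1).le)]
  -- norms of T and S
  have hTn : ‖T‖ ≤ Real.exp r := by
    rw [hT]
    refine (norm_mul_le _ _).trans ?_
    have h1 := my_norm_exp_le x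
    have h2 := my_norm_exp_le y
    calc ‖NormedSpace.exp x‖ * ‖NormedSpace.exp y‖
        ≤ Real.exp ‖x‖ * Real.exp ‖y‖ :=
          mul_le_mul h1 h2 (norm_nonneg _) (Real.exp_pos _).le
      _ = Real.exp r := by rw [← Real.exp_add, hxy]
  have hSn : ‖S‖ ≤ Real.exp r :=
    (my_norm_exp_le _).trans (Real.exp_le_exp.mpr hnxy)
  have hM1 : (1:ℝ) ≤ Real.exp r := Real.one_le_exp hr0
  have hpow := my_norm_pow_sub_pow_le T S hTn hSn hM1 s
  have hexps : Real.exp r ^ s = Real.exp c := by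
    rw [← Real.exp_nat_mul, hr, mul_div_cancel₀ _ (ne_of_gt hs0)]
  rw [← hSE]
  refine hpow.trans ?_
  rw [hexps]
  calc (s:ℝ) * Real.exp c * ‖T - S‖
      ≤ (s:ℝ) * Real.exp c * ((4 * Real.exp 1 * Real.exp 1 + 1) * r ^ 2) := by
        gcongr
      _ = K / s := by
        rw [hK, hr]
        field_simp
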